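/- Let p > 1, let N ≥ 2 be an integer, let α be a nonzero real number, let k be an integer with 0 ≤ k ≤ (N−1)/2, and let ω > α²/(N−2k)². Set a_k = arctanh(α/((2k−N)√ω)) and define, for x ≥ 0, φ_j(x) = (((p+1)ω/2)·sech²(((p−1)√ω/2)·x − a_k))^{1/(p−1)} for 1 ≤ j ≤ k and φ_j(x) = (((p+1)ω/2)·sech²(((p−1)√ω/2)·x + a_k))^{1/(p−1)} for k+1 ≤ j ≤ N. Then each φ_j is positive and twice continuously differentiable on [0,∞), satisfies −φ_j''(x) + ω·φ_j(x) − φ_j(x)^p = 0 for all x > 0, the boundary values agree: φ_1(0) = φ_2(0) = … = φ_N(0), and the derivatives satisfy the δ-vertex condition ∑_{j=1}^N φ_j'(0) = α·φ_1(0). -/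

import Mathlib

open MeasureTheory Real Set Filter Topology

/-- Inverse hyperbolic tangent. -/
noncomputable def arctanh (x : ℝ) : ℝ := Real.log ((1 + x) / (1 - x)) / 2

noncomputable def F (p ω c : ℝ) : ℝ → ℝ := fun x =>
  ((p + 1) * ω / 2 * (1 / Real.cosh ((p - 1) * Real.sqrt ω / 2 * x + c)) ^ 2) ^ (1 / (p - 1))

lemma F_eq (p ω c : ℝ) (hp : 1 < p) (hω : 0 < ω) (x : ℝ) :
    F p ω c x = ((p+1)*ω/2) ^ (1/(p-1)) *
      (Real.cosh ((p-1)*Real.sqrt ω/2 * x + c)) ^ (-(2/(p-1)) : ℝ) := by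
  set u := (p-1)*Real.sqrt ω/2 * x + c with hu
  have hcu : 0 < Real.cosh u := Real.cosh_pos u
  have hC : (0:ℝ) < (p+1)*ω/2 := by nlinarith
  unfold F
  rw [Real.mul_rpow hC.le (by positivity)]
  congr 1
  rw [one_div, inv_pow, ← Real.rpow_natCast (Real.cosh u) 2, ← Real.rpow_neg hcu.le,
    ← Real.rpow_mul hcu.le]
  norm_num [div_eq_mul_inv]

lemma aux_main (p ω c : ℝ) (hp : 1 < p) (hω : 0 < ω) :
    (∀ x, 0 < F p ω c x) ∧ ContDiff ℝ 2 (F p ω c) ∧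
    (∀ x, deriv (deriv (F p ω c)) x = ω * F p ω c x - F p ω c x ^ p) ∧
    deriv (F p ω c) 0 = -(Real.sqrt ω * (Real.sinh c / Real.cosh c)) * F p ω c 0 := by
  have hp1 : (0:ℝ) < p - 1 := by linarith
  set b : ℝ := (p-1)*Real.sqrt ω/2 with hb
  set q : ℝ := 2/(p-1) with hq
  set C : ℝ := (p+1)*ω/2 with hCdef
  have hC : (0:ℝ) < C := by rw [hCdef]; nlinarith
  set A : ℝ := C ^ (1/(p-1)) with hA
  have hApos : 0 < A := Real.rpow_pos_of_pos hC _
  set g : ℝ → ℝ := fun x => Real.cosh (b*x+c) with hg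
  have hgpos : ∀ x, 0 < g x := fun x => Real.cosh_pos _
  have hFeq : ∀ x, F p ω c x = A * g x ^ (-q : ℝ) := fun x => F_eq p ω c hp hω x
  have hsqrt : Real.sqrt ω ^ 2 = ω := Real.sq_sqrt hω.le
  have hsqpos : 0 < Real.sqrt ω := Real.sqrt_pos.mpr hω
  -- derivative of g
  have hgd : ∀ x, HasDerivAt g (Real.sinh (b*x+c) * b) x := by
    intro x
    have h1 : HasDerivAt (fun x : ℝ => b*x+c) b x := by
      simpa using ((hasDerivAt_id x).const_mul b).add_const c
    have := (Real.hasDerivAt_cosh (b*x+c)).comp x h1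
    exact this
  have hS : ∀ x, HasDerivAt (fun x => Real.sinh (b*x+c)) (Real.cosh (b*x+c) * b) x := by
    intro x
    have h1 : HasDerivAt (fun x : ℝ => b*x+c) b x := by
      simpa using ((hasDerivAt_id x).const_mul b).add_const c
    have := (Real.hasDerivAt_sinh (b*x+c)).comp x h1
    exact this
  have hrpow : ∀ (r : ℝ) (x : ℝ), HasDerivAt (fun x => g x ^ (r:ℝ))
      (r * g x ^ (r-1) * (Real.sinh (b*x+c) * b)) x := by
    intro r x
    exact (Real.hasDerivAt_rpow_const (Or.inl (hgpos x).ne')).comp x (hgd x)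
  have hF1 : ∀ x, HasDerivAt (F p ω c)
      (A * (-q * g x ^ (-q-1) * (Real.sinh (b*x+c) * b))) x := by
    intro x
    have := ((hrpow (-q) x).const_mul A)
    have hfe : (fun x => A * g x ^ (-q:ℝ)) = F p ω c := by
      funext y; rw [hFeq y]
    rw [hfe] at this
    convert this using 1
  have hderiv1 : deriv (F p ω c) = fun x =>
      A * (-q * g x ^ (-q-1) * (Real.sinh (b*x+c) * b)) := by
    funext x; exact (hF1 x).deriv
  have hF2 : ∀ x, HasDerivAt (deriv (F p ω c))
      (-(A*q*b) * ((-q-1) * g x ^ (-q-1-1) * (Real.sinh (b*x+c) * b) * Real.sinh (b*x+c)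
        + g x ^ (-q-1) * (Real.cosh (b*x+c) * b))) x := by
    intro x
    have hmul := ((hrpow (-q-1) x).mul (hS x)).const_mul (-(A*q*b))
    have hfe : (fun x => -(A*q*b) * (g x ^ (-q-1:ℝ) * Real.sinh (b*x+c)))
        = deriv (F p ω c) := by
      funext y; rw [hderiv1]; ring
    rw [← hfe]
    exact hmul
  have hbsq : b^2 = (p-1)^2*ω/4 := by rw [hb, div_pow, mul_pow, hsqrt]; ring
  have h1c : q^2*b^2 = ω := by rw [hq, hbsq]; field_simp; ring
  have h2c : q*(q+1)*b^2 = C := by rw [hq, hbsq, hCdef]; field_simp; ring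
  have hqb : q*b = Real.sqrt ω := by rw [hq, hb]; field_simp
  clear_value b q C A
  refine ⟨?_, ?_, ?_, ?_⟩
  · intro x
    rw [hFeq x]
    exact mul_pos hApos (Real.rpow_pos_of_pos (hgpos x) _)
  · have hfe : F p ω c = fun x => A * g x ^ (-q:ℝ) := funext hFeq
    rw [hfe]
    have hgc : ContDiff ℝ 2 g := by
      have h1 : ContDiff ℝ 2 (fun x : ℝ => b*x+c) :=
        (contDiff_const.mul contDiff_id).add contDiff_const
      exact (Real.contDiff_cosh.of_le le_top).comp h1
    rw [contDiff_iff_contDiffAt]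
    intro x
    exact contDiffAt_const.mul ((Real.contDiffAt_rpow_const_of_ne (hgpos x).ne').comp x
      hgc.contDiffAt)
  · intro x
    have hchpos : (0:ℝ) < Real.cosh (b*x+c) := Real.cosh_pos _
    have hd2 := (hF2 x).deriv
    rw [hd2, hFeq x]
    simp only [hg]
    set ch := Real.cosh (b*x+c) with hch
    set s := Real.sinh (b*x+c) with hs
    have eA : ch ^ (-q-1-1:ℝ) * (s*s) = ch ^ (-q:ℝ) - ch ^ (-q-2:ℝ) := by
      rw [show (-q-1-1:ℝ) = -q-2 by ring]
      have hG2 : ch^(-q-2:ℝ) * ch^(2:ℕ) = ch^(-q:ℝ) := by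
        rw [← Real.rpow_natCast ch 2, ← Real.rpow_add hchpos]; norm_num
      have hsq2 : s^2 = ch^2 - 1 := Real.sinh_sq (b*x+c)
      linear_combination (ch^(-q-2:ℝ)) * hsq2 + hG2
    have eB : ch ^ (-q-1:ℝ) * ch = ch ^ (-q:ℝ) := by
      rw [← Real.rpow_add_one hchpos.ne' (-q-1)]; norm_num
    have e3 : (A * ch ^ (-q:ℝ)) ^ p = C * A * ch ^ (-q-2:ℝ) := by
      rw [Real.mul_rpow hApos.le (Real.rpow_nonneg hchpos.le _),
        ← Real.rpow_mul hchpos.le]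
      have hqp : -q * p = -q-2 := by rw [hq]; field_simp; ring
      rw [hqp, hA, ← Real.rpow_mul hC.le]
      have : 1/(p-1)*p = 1 + 1/(p-1) := by field_simp; ring
      rw [this, Real.rpow_add hC, Real.rpow_one]
    rw [e3]
    linear_combination (A*q*b^2*(q+1)) * eA - (A*q*b^2) * eB
      + (A*(ch^(-q:ℝ))) * h1c - (A*(ch^(-q-2:ℝ))) * h2c
  · have hchpos : (0:ℝ) < Real.cosh c := Real.cosh_pos c
    rw [hderiv1, hFeq 0]
    simp only [hg, mul_zero, zero_add]
    have eB : Real.cosh c ^ (-q-1:ℝ) * Real.cosh c = Real.cosh c ^ (-q:ℝ) := by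
      rw [← Real.rpow_add_one hchpos.ne' (-q-1)]; norm_num
    have eB' : Real.cosh c ^ (-q-1:ℝ) = Real.cosh c ^ (-q:ℝ) / Real.cosh c := by
      rw [eq_div_iff hchpos.ne']; exact eB
    rw [eB', ← hqb]
    field_simp

lemma sinh_div_cosh_arctanh (t : ℝ) (h1 : -1 < t) (h2 : t < 1) :
    Real.sinh (arctanh t) / Real.cosh (arctanh t) = t := by
  have h1t : 0 < 1 - t := by linarith
  have h2t : 0 < 1 + t := by linarith
  set s : ℝ := (1+t)/(1-t) with hs
  have hspos : 0 < s := div_pos h2t h1t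
  have ha : arctanh t = Real.log s / 2 := rfl
  set e := Real.exp (Real.log s / 2) with he
  have hepos : 0 < e := Real.exp_pos _
  have he2 : e^2 = s := by
    rw [he, sq, ← Real.exp_add, show Real.log s / 2 + Real.log s / 2 = Real.log s by ring,
      Real.exp_log hspos]
  rw [ha, Real.sinh_eq, Real.cosh_eq, Real.exp_neg, ← he]
  have hden : (0:ℝ) < e + e⁻¹ := by positivity
  rw [div_div_div_cancel_right₀ two_ne_zero]
  rw [div_eq_iff hden.ne']
  have : s = e^2 := he2.symm
  have hseq : (1+t) * e⁻¹ = (1-t) * e := by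
    have : (1-t) * e^2 = 1+t := by
      rw [he2, hs]; field_simp
    field_simp
    linarith [this]
  field_simp at hseq ⊢
  nlinarith [hseq, hepos]

/-- The profiles `Φ_k^α` solve the stationary NLS-δ equation on a star graph with `N` edges:
each component is positive, `C²` on `[0,∞)`, solves `−φ'' + ωφ − φ^p = 0` on `(0,∞)`,
the boundary values at the vertex agree, and the δ-vertex condition holds. -/
theorem stationary_profile_solves_NLS_delta
    (p : ℝ) (hp : 1 < p) (N : ℕ) (hN : 2 ≤ N) (α : ℝ) (hα : α ≠ 0)
    (k : ℕ) (hk : (k : ℝ) ≤ ((N : ℝ) - 1) / 2) (ω : ℝ)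
    (hω : α ^ 2 / ((N : ℝ) - 2 * (k : ℝ)) ^ 2 < ω)
    (a : ℝ) (ha : a = arctanh (α / ((2 * (k : ℝ) - (N : ℝ)) * Real.sqrt ω)))
    (Φ : ℕ → ℝ → ℝ)
    (hΦ : ∀ j, Φ j = fun x : ℝ =>
      if j + 1 ≤ k then
        ((p + 1) * ω / 2 *
          (1 / Real.cosh ((p - 1) * Real.sqrt ω / 2 * x - a)) ^ 2) ^ (1 / (p - 1))
      else
        ((p + 1) * ω / 2 *
          (1 / Real.cosh ((p - 1) * Real.sqrt ω / 2 * x + a)) ^ 2) ^ (1 / (p - 1))) :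
    (∀ j < N, ∀ x ≥ (0 : ℝ), 0 < Φ j x) ∧
    (∀ j < N, ContDiffOn ℝ 2 (Φ j) (Set.Ici 0)) ∧
    (∀ j < N, ∀ x > (0 : ℝ), -(deriv (deriv (Φ j)) x) + ω * Φ j x - Φ j x ^ p = 0) ∧
    (∀ i < N, ∀ j < N, Φ i 0 = Φ j 0) ∧
    (∑ j ∈ Finset.range N, deriv (Φ j) 0 = α * Φ 0 0) := by
  have hNk1 : (1:ℝ) ≤ (N:ℝ) - 2*(k:ℝ) := by linarith
  have hα2 : (0:ℝ) < α^2 := by positivity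
  have hω0 : 0 < ω := lt_trans (div_pos hα2 (by nlinarith)) hω
  have hsqpos : 0 < Real.sqrt ω := Real.sqrt_pos.mpr hω0
  have hsq : Real.sqrt ω ^ 2 = ω := Real.sq_sqrt hω0.le
  have hkN : k < N := by
    have : (k:ℝ) < (N:ℝ) := by linarith
    exact_mod_cast this
  set D : ℝ := (2*(k:ℝ) - (N:ℝ)) * Real.sqrt ω with hD
  have hDneg : D < 0 := mul_neg_of_neg_of_pos (by linarith) hsqpos
  set t : ℝ := α / D with htdef
  have hαsq : α^2 < ω * ((N:ℝ) - 2*(k:ℝ))^2 := by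
    rw [div_lt_iff₀ (by nlinarith)] at hω; linarith
  have hD2 : D^2 = ((N:ℝ) - 2*(k:ℝ))^2 * ω := by
    rw [hD, mul_pow, hsq]; ring
  have htsq : t^2 < 1 := by
    rw [htdef, div_pow, hD2]
    rw [div_lt_one (by nlinarith)]
    nlinarith
  have ht1 : -1 < t := by nlinarith [sq_nonneg (t+1)]
  have ht2 : t < 1 := by nlinarith [sq_nonneg (t-1)]
  have hT : Real.sinh a / Real.cosh a = t := by
    rw [ha]; exact sinh_div_cosh_arctanh t ht1 ht2
  obtain ⟨P1, P2, P3, P4⟩ := aux_main p ω (-a) hp hω0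
  obtain ⟨Q1, Q2, Q3, Q4⟩ := aux_main p ω a hp hω0
  have hΦF : ∀ j, Φ j = if j + 1 ≤ k then F p ω (-a) else F p ω a := by
    intro j
    rw [hΦ j]
    by_cases h : j + 1 ≤ k
    · simp only [if_pos h]
      funext x
      simp [F, sub_eq_add_neg]
    · simp only [if_neg h]
      rfl
  have hF0 : F p ω (-a) 0 = F p ω a 0 := by
    simp [F, Real.cosh_neg]
  have hV0 : ∀ j, Φ j 0 = F p ω a 0 := by
    intro j
    rw [hΦF j]
    split_ifs
    · exact hF0
    · rfl
  have hd1 : deriv (F p ω (-a)) 0 = Real.sqrt ω * t * F p ω a 0 := by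
    rw [P4, Real.sinh_neg, Real.cosh_neg, neg_div, hT, hF0]; ring
  have hd2 : deriv (F p ω a) 0 = -(Real.sqrt ω * t) * F p ω a 0 := by
    rw [Q4, hT]
  refine ⟨?_, ?_, ?_, ?_, ?_⟩
  · intro j _ x _
    rw [hΦF j]
    split_ifs
    · exact P1 x
    · exact Q1 x
  · intro j _
    rw [hΦF j]
    split_ifs
    · exact P2.contDiffOn
    · exact Q2.contDiffOn
  · intro j _ x _
    rw [hΦF j]
    split_ifs
    · rw [P3 x]; ring
    · rw [Q3 x]; ring
  · intro i _ j _
    rw [hV0 i, hV0 j]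
  · have hderivj : ∀ j, deriv (Φ j) 0 =
        if j + 1 ≤ k then deriv (F p ω (-a)) 0 else deriv (F p ω a) 0 := by
      intro j
      rw [hΦF j]
      split_ifs <;> rfl
    rw [Finset.sum_congr rfl (fun j _ => hderivj j), Finset.sum_ite]
    have hfil1 : (Finset.range N).filter (fun j => j + 1 ≤ k) = Finset.range k := by
      ext j; simp [Finset.mem_filter]; omega
    have hfil2 : (Finset.range N).filter (fun j => ¬(j + 1 ≤ k)) = Finset.Ico k N := by
      ext j; simp [Finset.mem_filter]; omega
    rw [hfil1, hfil2, Finset.sum_const, Finset.sum_const, Finset.card_range,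
      Nat.card_Ico, nsmul_eq_mul, nsmul_eq_mul, hd1, hd2, hV0 0,
      Nat.cast_sub hkN.le]
    have hDt : D * t = α := mul_div_cancel₀ α (ne_of_lt hDneg)
    have key : ((k:ℝ) * (Real.sqrt ω * t) + ((N:ℝ) - (k:ℝ)) * (-(Real.sqrt ω * t))) = α := by
      rw [← hDt, hD]; ring
    linear_combination (F p ω a 0) * key
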